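/- For 1/2 < p < 4/5, the number Q(p) = (1 + p - 3√(p(1-p)))/(2p - 1) lies in (0,1) and satisfies f(p, Q(p)) = 0, where f(p,q) = -1 + 5p - 2q - 2pq - q² + 2pq². Moreover, v(p, Q(p), 1/2) = (4/3)(1 - √(p(1-p))), where v(p,q,r) = p·q/(q+r-qr) + (1-p)(1-q)/(1-qr). -/

import Mathlib

theorem asymmetric_game_value (p : ℝ) (hp1 : 1/2 < p) (hp2 : p < 4/5) :
    let Q : ℝ := (1 + p - 3 * Real.sqrt (p * (1 - p))) / (2*p - 1)
    let f : ℝ → ℝ → ℝ := fun p q => -1 + 5*p - 2*q - 2*p*q - q^2 + 2*p*q^2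
    let v : ℝ → ℝ → ℝ → ℝ := fun p q r =>
      p * q / (q + r - q*r) + (1 - p) * (1 - q) / (1 - q*r)
    Q ∈ Set.Ioo (0:ℝ) 1 ∧ f p Q = 0 ∧
      v p Q (1/2) = (4/3) * (1 - Real.sqrt (p * (1 - p))) := by
  intro Q f v
  set s : ℝ := Real.sqrt (p * (1 - p)) with hs
  have hpos : (0:ℝ) < p * (1 - p) := by nlinarith
  have hs2 : s ^ 2 = p * (1 - p) := Real.sq_sqrt hpos.le
  have hs0 : 0 < s := Real.sqrt_pos.mpr hpos
  have h2p : 0 < 2 * p - 1 := by linarith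
  have hsp : s < p := by nlinarith
  have hs1p : 1 - p < s := by nlinarith
  have hnum : 0 < 1 + p - 3 * s := by nlinarith
  have hQ : Q = (1 + p - 3 * s) / (2*p - 1) := rfl
  have h2 : (2*p-1) ≠ 0 := ne_of_gt h2p
  have hps : p - s ≠ 0 := ne_of_gt (by linarith)
  have hp1s : p - 1 + s ≠ 0 := ne_of_gt (by linarith)
  have hQ1 : Q < 1 := by rw [hQ, div_lt_one h2p]; nlinarith
  have hQ0 : 0 < Q := div_pos hnum h2p
  refine ⟨⟨hQ0, hQ1⟩, ?_, ?_⟩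
  · show -1 + 5*p - 2*Q - 2*p*Q - Q^2 + 2*p*Q^2 = 0
    rw [hQ]
    field_simp [show p * 2 - 1 ≠ 0 by contrapose! h2; linarith]
    linear_combination (9*(2*p-1)) * hs2
  · show p * Q / (Q + 1/2 - Q*(1/2)) + (1 - p) * (1 - Q) / (1 - Q*(1/2))
      = (4/3) * (1 - s)
    have e1 : Q + 1/2 - Q*(1/2) = 3*(p-s)/(2*(2*p-1)) := by rw [hQ]; field_simp [show p * 2 - 1 ≠ 0 by contrapose! h2; linarith]; ring
    have e2 : 1 - Q*(1/2) = 3*(p-1+s)/(2*(2*p-1)) := by rw [hQ]; field_simp [show p * 2 - 1 ≠ 0 by contrapose! h2; linarith]; ring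
    have e3 : 1 - Q = (p-2+3*s)/(2*p-1) := by rw [hQ]; field_simp [show p * 2 - 1 ≠ 0 by contrapose! h2; linarith]; ring
    rw [e1, e2, e3, hQ]
    field_simp [show p * 2 - 1 ≠ 0 by contrapose! h2; linarith]
    linear_combination (2 - 4*s) * hs2
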